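/- The optimal value of the relaxed primal problem equals that of the average primal problem: W_pr = W_pa. -/
import Mathlib


open Finset

noncomputable section

/-- `nxt z l` is `z (l+1)`, with the convention `z (k+1) = 0`. -/
def nxt {k : ℕ} (z : Fin k → ℝ) (l : Fin k) : ℝ :=
  if h : (l : ℕ) + 1 < k then z ⟨(l : ℕ) + 1, h⟩ else 0

/-- `z` is an ordered allocation: `z i l ≥ z i (l+1)` for all `i, l` (with `z i (k+1) = 0`). -/
def OrdAlloc {n k : ℕ} (z : Fin n → Fin k → ℝ) : Prop := ∀ i l, nxt (z i) l ≤ z i l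

/-- Doubly stochastic `k × k` matrix. -/
def DS {k : ℕ} (M : Fin k → Fin k → ℝ) : Prop :=
  (∀ s t, 0 ≤ M s t) ∧ (∀ s, ∑ t, M s t = 1) ∧ (∀ t, ∑ s, M s t = 1)

/-- The permutation matrix of `π`. -/
def permMat {k : ℕ} (π : Equiv.Perm (Fin k)) : Fin k → Fin k → ℝ :=
  fun s t => if π s = t then 1 else 0

/-- Aggregate utility `U(z) = ∑ i, ∑ l, h i l * v i (z i l)`. -/
def U {n k : ℕ} (h : Fin n → Fin k → ℝ) (v : Fin n → ℝ → ℝ)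
    (z : Fin n → Fin k → ℝ) : ℝ :=
  ∑ i, ∑ l, h i l * v i (z i l)

/-- Lagrangian of the system problem. -/
def ThS {n m k : ℕ} (h : Fin n → Fin k → ℝ) (v : Fin n → ℝ → ℝ)
    (c : Fin m → ℝ) (J : Fin n → Finset (Fin m))
    (π : Fin n → Equiv.Perm (Fin k)) (z : Fin n → Fin k → ℝ)
    (lam : Fin m → Fin k → ℝ) : ℝ :=
  U h v z + ∑ j, ∑ l, lam j l * (c j - ∑ i ∈ univ.filter (fun i => j ∈ J i), z i (π i l))

/-- Lagrangian of the relaxed system problem (doubly stochastic matrices). -/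
def ThR {n m k : ℕ} (h : Fin n → Fin k → ℝ) (v : Fin n → ℝ → ℝ)
    (c : Fin m → ℝ) (J : Fin n → Finset (Fin m))
    (M : Fin n → Fin k → Fin k → ℝ) (z : Fin n → Fin k → ℝ)
    (lam : Fin m → Fin k → ℝ) : ℝ :=
  U h v z + ∑ j, ∑ l, lam j l *
    (c j - ∑ i ∈ univ.filter (fun i => j ∈ J i), ∑ t, M i l t * z i t)

/-- Lagrangian of the average system problem. -/
def ThA {n m k : ℕ} (h : Fin n → Fin k → ℝ) (v : Fin n → ℝ → ℝ)
    (c : Fin m → ℝ) (J : Fin n → Finset (Fin m))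
    (z : Fin n → Fin k → ℝ) (lamb : Fin m → ℝ) : ℝ :=
  U h v z + ∑ j, lamb j *
    (c j - ∑ i ∈ univ.filter (fun i => j ∈ J i), (1 / (k : ℝ)) * ∑ l, z i l)

/-- Primal system value `W_ps` (sup-inf). -/
def Wps (n m k : ℕ) (h : Fin n → Fin k → ℝ) (v : Fin n → ℝ → ℝ)
    (c : Fin m → ℝ) (J : Fin n → Finset (Fin m)) : EReal :=
  ⨆ π : Fin n → Equiv.Perm (Fin k), ⨆ z : Fin n → Fin k → ℝ, ⨆ _ : OrdAlloc z,
    ⨅ lam : Fin m → Fin k → ℝ, ⨅ _ : ∀ j l, 0 ≤ lam j l, (ThS h v c J π z lam : EReal)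

/-- Dual system value `W_ds` (inf-sup). -/
def Wds (n m k : ℕ) (h : Fin n → Fin k → ℝ) (v : Fin n → ℝ → ℝ)
    (c : Fin m → ℝ) (J : Fin n → Finset (Fin m)) : EReal :=
  ⨅ lam : Fin m → Fin k → ℝ, ⨅ _ : ∀ j l, 0 ≤ lam j l,
    ⨆ π : Fin n → Equiv.Perm (Fin k), ⨆ z : Fin n → Fin k → ℝ, ⨆ _ : OrdAlloc z,
      (ThS h v c J π z lam : EReal)

/-- Relaxed primal value `W_pr` (sup-inf). -/
def Wpr (n m k : ℕ) (h : Fin n → Fin k → ℝ) (v : Fin n → ℝ → ℝ)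
    (c : Fin m → ℝ) (J : Fin n → Finset (Fin m)) : EReal :=
  ⨆ M : Fin n → Fin k → Fin k → ℝ, ⨆ _ : ∀ i, DS (M i),
    ⨆ z : Fin n → Fin k → ℝ, ⨆ _ : OrdAlloc z,
      ⨅ lam : Fin m → Fin k → ℝ, ⨅ _ : ∀ j l, 0 ≤ lam j l, (ThR h v c J M z lam : EReal)

/-- Relaxed dual value `W_dr` (inf-sup). -/
def Wdr (n m k : ℕ) (h : Fin n → Fin k → ℝ) (v : Fin n → ℝ → ℝ)
    (c : Fin m → ℝ) (J : Fin n → Finset (Fin m)) : EReal :=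
  ⨅ lam : Fin m → Fin k → ℝ, ⨅ _ : ∀ j l, 0 ≤ lam j l,
    ⨆ M : Fin n → Fin k → Fin k → ℝ, ⨆ _ : ∀ i, DS (M i),
      ⨆ z : Fin n → Fin k → ℝ, ⨆ _ : OrdAlloc z, (ThR h v c J M z lam : EReal)

/-- Average primal value `W_pa` (sup-inf). -/
def Wpa (n m k : ℕ) (h : Fin n → Fin k → ℝ) (v : Fin n → ℝ → ℝ)
    (c : Fin m → ℝ) (J : Fin n → Finset (Fin m)) : EReal :=
  ⨆ z : Fin n → Fin k → ℝ, ⨆ _ : OrdAlloc z,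
    ⨅ lamb : Fin m → ℝ, ⨅ _ : ∀ j, 0 ≤ lamb j, (ThA h v c J z lamb : EReal)

/-- Average dual value `W_da` (inf-sup). -/
def Wda (n m k : ℕ) (h : Fin n → Fin k → ℝ) (v : Fin n → ℝ → ℝ)
    (c : Fin m → ℝ) (J : Fin n → Finset (Fin m)) : EReal :=
  ⨅ lamb : Fin m → ℝ, ⨅ _ : ∀ j, 0 ≤ lamb j,
    ⨆ z : Fin n → Fin k → ℝ, ⨆ _ : OrdAlloc z, (ThA h v c J z lamb : EReal)

/-- The optimal value of the relaxed primal problem equals that of the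
average primal problem: `W_pr = W_pa`. -/

lemma infLagA {ι : Type*} [Fintype ι] [DecidableEq ι] (A : ℝ) (g : ι → ℝ) :
    (⨅ lam : ι → ℝ, ⨅ _ : ∀ d, 0 ≤ lam d, ((A + ∑ d, lam d * g d : ℝ) : EReal))
    = if ∀ d, 0 ≤ g d then (A : EReal) else ⊥ := by
  split_ifs with hg
  · apply le_antisymm
    · refine le_trans (iInf_le _ (fun _ => 0)) ?_
      refine le_trans (iInf_le _ (fun _ => le_refl 0)) ?_
      simp
    · refine le_iInf fun lam => le_iInf fun hlam => ?_
      have h1 : 0 ≤ ∑ d, lam d * g d :=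
        Finset.sum_nonneg fun d _ => mul_nonneg (hlam d) (hg d)
      have : (A:ℝ) ≤ A + ∑ d, lam d * g d := by linarith
      exact_mod_cast this
  · push_neg at hg
    obtain ⟨d0, hd0⟩ := hg
    rw [EReal.eq_bot_iff_forall_lt]
    intro r
    set t : ℝ := (min (r - A) 0 - 1) / g d0 with ht
    have hg0 : g d0 < 0 := hd0
    have htn : 0 ≤ t := by
      rw [ht]
      apply div_nonneg_iff.mpr
      right
      exact ⟨by have := min_le_right (r - A) 0; linarith, hg0.le⟩
    have htg : t * g d0 = min (r - A) 0 - 1 := by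
      rw [ht, div_mul_cancel₀ _ hg0.ne]
    set lam : ι → ℝ := fun d => if d = d0 then t else 0 with hlam
    have hlamnn : ∀ d, 0 ≤ lam d := by
      intro d; simp only [hlam]; split <;> simp [htn]
    have hsum : ∑ d, lam d * g d = t * g d0 := by
      simp only [hlam, ite_mul, zero_mul]
      rw [Finset.sum_ite_eq' univ d0 (fun d => t * g d)]
      simp
    refine lt_of_le_of_lt (le_trans (iInf_le _ lam) (iInf_le _ hlamnn)) ?_
    rw [hsum, htg]
    have : A + (min (r - A) 0 - 1) < r := by
      have := min_le_left (r - A) 0; linarith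
    exact_mod_cast this


lemma infLagB {m k : ℕ} (A : ℝ) (g : Fin m → Fin k → ℝ) :
    (⨅ lam : Fin m → Fin k → ℝ, ⨅ _ : ∀ j l, 0 ≤ lam j l,
      ((A + ∑ j, ∑ l, lam j l * g j l : ℝ) : EReal))
    = if ∀ j l, 0 ≤ g j l then (A : EReal) else ⊥ := by
  split_ifs with hg
  · apply le_antisymm
    · refine le_trans (iInf_le _ (fun _ _ => 0)) ?_
      refine le_trans (iInf_le _ (fun _ _ => le_refl 0)) ?_
      simp
    · refine le_iInf fun lam => le_iInf fun hlam => ?_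
      have h1 : 0 ≤ ∑ j, ∑ l, lam j l * g j l :=
        Finset.sum_nonneg fun j _ => Finset.sum_nonneg fun l _ =>
          mul_nonneg (hlam j l) (hg j l)
      have : (A:ℝ) ≤ A + ∑ j, ∑ l, lam j l * g j l := by linarith
      exact_mod_cast this
  · push_neg at hg
    obtain ⟨j0, l0, hd0⟩ := hg
    rw [EReal.eq_bot_iff_forall_lt]
    intro r
    set t : ℝ := (min (r - A) 0 - 1) / g j0 l0 with ht
    have hg0 : g j0 l0 < 0 := hd0
    have htn : 0 ≤ t := by
      rw [ht]
      apply div_nonneg_iff.mpr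
      right
      exact ⟨by have := min_le_right (r - A) 0; linarith, hg0.le⟩
    have htg : t * g j0 l0 = min (r - A) 0 - 1 := by
      rw [ht, div_mul_cancel₀ _ hg0.ne]
    set lam : Fin m → Fin k → ℝ :=
      fun j l => if j = j0 then (if l = l0 then t else 0) else 0 with hlam
    have hlamnn : ∀ j l, 0 ≤ lam j l := by
      intro j l; simp only [hlam]; split <;> [skip; simp]
      split <;> simp [htn]
    have hsum : ∑ j, ∑ l, lam j l * g j l = t * g j0 l0 := by
      simp only [hlam, ite_mul, zero_mul]
      rw [Finset.sum_eq_single j0]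
      · simp [Finset.sum_ite_eq']
      · intro b _ hb; simp [hb]
      · intro hj; exact absurd (mem_univ j0) hj
    refine lt_of_le_of_lt (le_trans (iInf_le _ lam) (iInf_le _ hlamnn)) ?_
    rw [hsum, htg]
    have : A + (min (r - A) 0 - 1) < r := by
      have := min_le_left (r - A) 0; linarith
    exact_mod_cast this

theorem stmt9 (n m k : ℕ) (hk : 1 ≤ k)
    (c : Fin m → ℝ) (hc : ∀ j, 0 < c j)
    (J : Fin n → Finset (Fin m)) (hJ : ∀ i, (J i).Nonempty)
    (hF : Bornology.IsBounded {x : Fin n → ℝ | (∀ i, 0 ≤ x i) ∧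
        ∀ j, ∑ i ∈ univ.filter (fun i => j ∈ J i), x i ≤ c j})
    (v : Fin n → ℝ → ℝ)
    (hvc : ∀ i, ContinuousOn (v i) (Set.Ici 0))
    (hvd : ∀ i, DifferentiableOn ℝ (v i) (Set.Ici 0))
    (hvcc : ∀ i, ConcaveOn ℝ (Set.Ici 0) (v i))
    (hvm : ∀ i, StrictMonoOn (v i) (Set.Ici 0))
    (hvnn : ∀ i, ∀ x ∈ Set.Ici (0 : ℝ), 0 ≤ v i x)
    (h : Fin n → Fin k → ℝ) (hh : ∀ i l, 0 < h i l) :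
    Wpr n m k h v c J = Wpa n m k h v c J := by

  have hk0 : (0:ℝ) < (k:ℝ) := by exact_mod_cast hk
  have hkne : (k:ℝ) ≠ 0 := ne_of_gt hk0
  apply le_antisymm
  · -- Wpr ≤ Wpa
    rw [Wpr]
    refine iSup_le fun M => iSup_le fun hM => iSup_le fun z => iSup_le fun hz => ?_
    have hinf : (⨅ lam : Fin m → Fin k → ℝ, ⨅ _ : ∀ j l, 0 ≤ lam j l,
        (ThR h v c J M z lam : EReal))
        = if (∀ j l, 0 ≤ c j - ∑ i ∈ univ.filter (fun i => j ∈ J i), ∑ t, M i l t * z i t)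
          then ((U h v z : ℝ) : EReal) else ⊥ := by
      simpa [ThR] using infLagB (U h v z)
        (fun j l => c j - ∑ i ∈ univ.filter (fun i => j ∈ J i), ∑ t, M i l t * z i t)
    rw [hinf]
    split_ifs with hfeas
    · have hfeasA : ∀ j, 0 ≤ c j -
          ∑ i ∈ univ.filter (fun i => j ∈ J i), (1/(k:ℝ)) * ∑ l, z i l := by
        intro j
        have hS : ∑ l : Fin k, ∑ i ∈ univ.filter (fun i => j ∈ J i), ∑ t, M i l t * z i t
            = ∑ i ∈ univ.filter (fun i => j ∈ J i), ∑ l, z i l := by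
          rw [Finset.sum_comm]
          refine Finset.sum_congr rfl fun i _ => ?_
          rw [Finset.sum_comm]
          refine Finset.sum_congr rfl fun t _ => ?_
          rw [← Finset.sum_mul, (hM i).2.2 t, one_mul]
        have h0 : 0 ≤ ∑ l : Fin k, (c j -
            ∑ i ∈ univ.filter (fun i => j ∈ J i), ∑ t, M i l t * z i t) :=
          Finset.sum_nonneg fun l _ => hfeas j l
        rw [Finset.sum_sub_distrib, hS, Finset.sum_const, card_univ, Fintype.card_fin,
          nsmul_eq_mul] at h0
        set T : ℝ := ∑ i ∈ univ.filter (fun i => j ∈ J i), ∑ l, z i l with hT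
        rw [sub_nonneg, ← Finset.mul_sum, ← hT]
        calc (1/(k:ℝ)) * T ≤ (1/(k:ℝ)) * ((k:ℝ) * c j) := by
              apply mul_le_mul_of_nonneg_left (by linarith) (by positivity)
          _ = c j := by field_simp
      have hinfA : (⨅ lamb : Fin m → ℝ, ⨅ _ : ∀ j, 0 ≤ lamb j,
          (ThA h v c J z lamb : EReal))
          = if (∀ j, 0 ≤ c j - ∑ i ∈ univ.filter (fun i => j ∈ J i), (1/(k:ℝ)) * ∑ l, z i l)
            then ((U h v z : ℝ) : EReal) else ⊥ := by
        simpa [ThA] using infLagA (U h v z)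
          (fun j => c j - ∑ i ∈ univ.filter (fun i => j ∈ J i), (1/(k:ℝ)) * ∑ l, z i l)
      rw [Wpa]
      refine le_iSup_of_le z (le_iSup_of_le hz (le_of_eq ?_))
      rw [hinfA, if_pos hfeasA]
    · exact bot_le
  · -- Wpa ≤ Wpr
    rw [Wpa]
    refine iSup_le fun z => iSup_le fun hz => ?_
    set M : Fin n → Fin k → Fin k → ℝ := fun _ _ _ => 1/(k:ℝ) with hMdef
    have hM : ∀ i, DS (M i) := by
      intro i
      refine ⟨fun s t => by positivity, fun s => ?_, fun t => ?_⟩ <;>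
        simp [hMdef, Finset.sum_const, Fintype.card_fin] <;> field_simp
    rw [Wpr]
    refine le_iSup_of_le M (le_iSup_of_le hM (le_iSup_of_le z (le_iSup_of_le hz ?_)))
    have hinfR : (⨅ lam : Fin m → Fin k → ℝ, ⨅ _ : ∀ j l, 0 ≤ lam j l,
        (ThR h v c J M z lam : EReal))
        = if (∀ (j : Fin m) (_ : Fin k), 0 ≤ c j -
              ∑ i ∈ univ.filter (fun i => j ∈ J i), (1/(k:ℝ)) * ∑ l, z i l)
          then ((U h v z : ℝ) : EReal) else ⊥ := by
      have := infLagB (U h v z)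
        (fun j (_ : Fin k) => c j -
          ∑ i ∈ univ.filter (fun i => j ∈ J i), (1/(k:ℝ)) * ∑ l, z i l)
      rw [← this]
      refine iInf_congr fun lam => iInf_congr_Prop Iff.rfl fun _ => ?_
      have hre : ThR h v c J M z lam = U h v z + ∑ j, ∑ l, lam j l *
          (c j - ∑ i ∈ univ.filter (fun i => j ∈ J i), (1/(k:ℝ)) * ∑ l, z i l) := by
        simp only [ThR, hMdef]
        congr 1
        refine Finset.sum_congr rfl fun j _ => Finset.sum_congr rfl fun l _ => ?_
        congr 2
        refine Finset.sum_congr rfl fun i _ => ?_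
        rw [Finset.mul_sum]
      rw [hre]
    have hinfA : (⨅ lamb : Fin m → ℝ, ⨅ _ : ∀ j, 0 ≤ lamb j,
        (ThA h v c J z lamb : EReal))
        = if (∀ j, 0 ≤ c j - ∑ i ∈ univ.filter (fun i => j ∈ J i), (1/(k:ℝ)) * ∑ l, z i l)
          then ((U h v z : ℝ) : EReal) else ⊥ := by
      simpa [ThA] using infLagA (U h v z)
        (fun j => c j - ∑ i ∈ univ.filter (fun i => j ∈ J i), (1/(k:ℝ)) * ∑ l, z i l)
    rw [hinfR, hinfA]
    have hiff : (∀ (j : Fin m) (_ : Fin k), 0 ≤ c j -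
          ∑ i ∈ univ.filter (fun i => j ∈ J i), (1/(k:ℝ)) * ∑ l, z i l)
        ↔ (∀ j, 0 ≤ c j - ∑ i ∈ univ.filter (fun i => j ∈ J i), (1/(k:ℝ)) * ∑ l, z i l) :=
      ⟨fun H j => H j ⟨0, hk⟩, fun H j _ => H j⟩
    rw [if_congr hiff rfl rfl]
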